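/- arXiv:0905.4535 — 3 statements merged into one kernel-verified Lean document; each statement's English description precedes it below -/
import Mathlib

section
/- Let T be a bounded linear operator on a complex Hilbert space with σ(T) ∩ ∂𝔻 = ∅. Then T is not Li-Yorke chaotic. -/
open Filter Topology Metric Complex

/-- A pair `{x, y}` is a Li-Yorke chaotic pair for the operator `T`. -/
def LiYorkePair {E : Type*} [NormedAddCommGroup E] [NormedSpace ℂ E]
    (T : E →L[ℂ] E) (x y : E) : Prop :=
  0 < Filter.limsup (fun n => ‖(T ^ n) x - (T ^ n) y‖) Filter.atTop ∧
    Filter.liminf (fun n => ‖(T ^ n) x - (T ^ n) y‖) Filter.atTop = 0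

/-- `T` is Li-Yorke chaotic. -/
def LiYorkeChaotic {E : Type*} [NormedAddCommGroup E] [NormedSpace ℂ E]
    (T : E →L[ℂ] E) : Prop :=
  ∃ Γ : Set E, ¬Γ.Countable ∧ ∀ x ∈ Γ, ∀ y ∈ Γ, x ≠ y → LiYorkePair T x y

/-- A continuous linear map commutes with circle integrals. -/
lemma clm_circleIntegral_comm {E F : Type*} [NormedAddCommGroup E] [NormedSpace ℂ E]
    [CompleteSpace E] [NormedAddCommGroup F] [NormedSpace ℂ F] [CompleteSpace F]
    (L : E →L[ℂ] F) {f : ℂ → E} {c : ℂ} {R : ℝ} (hf : CircleIntegrable f c R) :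
    (∮ z in C(c, R), L (f z)) = L (∮ z in C(c, R), f z) :=
  calc (∮ z in C(c, R), L (f z))
      = ∫ θ in (0:ℝ)..2 * Real.pi,
          L (deriv (circleMap c R) θ • f (circleMap c R θ)) := by
        simp only [circleIntegral, map_smul]
    _ = L (∫ θ in (0:ℝ)..2 * Real.pi, deriv (circleMap c R) θ • f (circleMap c R θ)) :=
        L.intervalIntegral_comp_comm hf.out
    _ = L (∮ z in C(c, R), f z) := rfl

theorem not_liYorkeChaotic_of_spectrum_disjoint_circle
    {H : Type*} [NormedAddCommGroup H] [InnerProductSpace ℂ H] [CompleteSpace H]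
    [TopologicalSpace.SeparableSpace H]
    (T : H →L[ℂ] H)
    (hspec : spectrum ℂ T ∩ {z : ℂ | ‖z‖ = 1} = ∅) :
    ¬ LiYorkeChaotic T := by
  rintro ⟨Γ, hΓ, hpair⟩
  -- an uncountable set has two distinct points
  obtain ⟨x, hx, y, hy, hxy⟩ : ∃ x ∈ Γ, ∃ y ∈ Γ, x ≠ y := by
    by_contra hcon
    push_neg at hcon
    rcases Γ.eq_empty_or_nonempty with hE | ⟨a, ha⟩
    · exact hΓ (hE ▸ Set.countable_empty)
    · refine hΓ ((Set.countable_singleton a).mono fun b hb => ?_)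
      simp [hcon b hb a ha]
  obtain ⟨hsup, hinf⟩ := hpair x hx y hy hxy
  set z : H := x - y with hzdef
  have hfun : (fun n => ‖(T ^ n) x - (T ^ n) y‖) = fun n => ‖(T ^ n) z‖ := by
    funext n; rw [hzdef, map_sub]
  rw [hfun] at hsup hinf
  set u : ℕ → ℝ := fun n => ‖(T ^ n) z‖ with hu
  -- the unit circle lies in the resolvent set
  have hsub : sphere (0 : ℂ) 1 ⊆ resolventSet ℂ T := by
    intro w hw
    by_contra hww
    have hwσ : w ∈ spectrum ℂ T := hww
    exact Set.eq_empty_iff_forall_notMem.mp hspec w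
      ⟨hwσ, by simpa using mem_sphere_zero_iff_norm.mp hw⟩
  obtain ⟨ε, hε0, hεsub⟩ := (isCompact_sphere (0 : ℂ) 1).exists_cthickening_subset_open
    (spectrum.isOpen_resolventSet T) hsub
  set ε' : ℝ := min ε (1 / 2) with hε'
  have hε'0 : 0 < ε' := lt_min hε0 (by norm_num)
  have hε'le : ε' ≤ ε := min_le_left _ _
  have hε'lt : ε' < 1 := lt_of_le_of_lt (min_le_right _ _) (by norm_num)
  set r : ℝ := 1 - ε' with hrdef
  set s : ℝ := 1 + ε' with hsdef
  have hr0 : 0 < r := by simp only [hrdef]; linarith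
  have hr1 : r < 1 := by simp only [hrdef]; linarith
  have hs1 : 1 < s := by simp only [hsdef]; linarith
  have hs0 : 0 < s := lt_trans one_pos hs1
  have hrs : r ≤ s := by simp only [hrdef, hsdef]; linarith
  -- the closed annulus r ≤ ‖w‖ ≤ s lies in the resolvent set
  set Ann : Set ℂ := closedBall 0 s \ ball 0 r with hAnn
  have hAnnSub : Ann ⊆ resolventSet ℂ T := by
    rintro w ⟨hw1, hw2⟩
    have hws : ‖w‖ ≤ s := by simpa [mem_closedBall_zero_iff] using hw1
    have hwr : r ≤ ‖w‖ := by
      by_contra hc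
      exact hw2 (mem_ball_zero_iff.mpr (lt_of_not_ge hc))
    apply hεsub
    have hw0 : (0:ℝ) < ‖w‖ := lt_of_lt_of_le hr0 hwr
    have hmem : ((‖w‖:ℝ)⁻¹ : ℝ) • w ∈ sphere (0 : ℂ) 1 := by
      rw [mem_sphere_zero_iff_norm, norm_smul, Real.norm_eq_abs,
        _root_.abs_of_pos (inv_pos.mpr hw0), inv_mul_cancel₀ hw0.ne']
    refine mem_cthickening_of_dist_le w _ ε _ hmem ?_
    have hdist : dist w (((‖w‖:ℝ)⁻¹ : ℝ) • w) = |‖w‖ - 1| := by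
      rw [dist_eq_norm]
      have h3 : w - ((‖w‖:ℝ)⁻¹ : ℝ) • w = ((1 - (‖w‖:ℝ)⁻¹ : ℝ)) • w := by
        rw [sub_smul, one_smul]
      have h5 : (1 - (‖w‖:ℝ)⁻¹) * ‖w‖ = ‖w‖ - 1 := by
        rw [sub_mul, one_mul, inv_mul_cancel₀ hw0.ne']
      rw [h3, norm_smul, Real.norm_eq_abs]
      calc |1 - (‖w‖:ℝ)⁻¹| * ‖w‖ = |1 - (‖w‖:ℝ)⁻¹| * |‖w‖| := by
            rw [_root_.abs_of_pos hw0]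
        _ = |(1 - (‖w‖:ℝ)⁻¹) * ‖w‖| := (abs_mul _ _).symm
        _ = |‖w‖ - 1| := by rw [h5]
    rw [hdist]
    have h1 : ‖w‖ - 1 ≤ ε' := by simp only [hsdef] at hws; linarith
    have h2 : 1 - ‖w‖ ≤ ε' := by simp only [hrdef] at hwr; linarith
    calc |‖w‖ - 1| ≤ ε' := abs_le.mpr ⟨by linarith, h1⟩
      _ ≤ ε := hε'le
  have hAnnCpt : IsCompact Ann := (isCompact_closedBall _ _).diff isOpen_ball
  have hcont : ContinuousOn (resolvent T) Ann := fun w hw =>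
    ((spectrum.hasDerivAt_resolvent (hAnnSub hw)).differentiableAt.continuousAt).continuousWithinAt
  obtain ⟨M₀, hM₀⟩ := hAnnCpt.exists_bound_of_continuousOn hcont
  set M : ℝ := max M₀ 0 with hMdef
  have hM0 : 0 ≤ M := le_max_right _ _
  have hM : ∀ w ∈ Ann, ‖resolvent T w‖ ≤ M := fun w hw => le_trans (hM₀ w hw) (le_max_left _ _)
  -- spheres inside the annulus
  have hsphereAnn : ∀ ρ : ℝ, r ≤ ρ → ρ ≤ s → sphere (0:ℂ) ρ ⊆ Ann := by
    intro ρ h1 h2 w hw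
    have hwn : ‖w‖ = ρ := mem_sphere_zero_iff_norm.mp hw
    constructor
    · rw [mem_closedBall_zero_iff, hwn]; exact h2
    · rw [mem_ball_zero_iff, hwn]; exact not_lt.mpr h1
  have hzpowCont : ∀ (n : ℤ) (ρ : ℝ), 0 < ρ →
      ContinuousOn (fun w : ℂ => w ^ n) (sphere (0:ℂ) ρ) := by
    intro n ρ hρ w hw
    have hw0 : w ≠ 0 := by
      intro h
      rw [h] at hw
      have := mem_sphere_zero_iff_norm.mp hw
      simp at this
      exact hρ.ne this
    exact (continuousAt_zpow₀ w n (Or.inl hw0)).continuousWithinAt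
  -- integrability
  have hInt : ∀ (n : ℤ) (ρ : ℝ), r ≤ ρ → ρ ≤ s →
      CircleIntegrable (fun w : ℂ => w ^ n • resolvent T w) 0 ρ := by
    intro n ρ h1 h2
    have hρ : 0 < ρ := lt_of_lt_of_le hr0 h1
    exact ContinuousOn.circleIntegrable hρ.le
      ((hzpowCont n ρ hρ).smul (hcont.mono (hsphereAnn ρ h1 h2)))
  -- the circle integrals
  set J : ℤ → ℝ → (H →L[ℂ] H) := fun n ρ => ∮ w in C(0, ρ), w ^ n • resolvent T w with hJ
  -- scalar circle integrals
  have hzp0 : ∀ (n : ℤ), n ≠ -1 → ∀ ρ : ℝ, (∮ w in C((0:ℂ), ρ), w ^ n) = 0 := by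
    intro n hn ρ
    have := circleIntegral.integral_sub_zpow_of_ne hn 0 0 ρ
    simpa using this
  have hzp1 : ∀ ρ : ℝ, 0 < ρ → (∮ w in C((0:ℂ), ρ), w ^ (-1 : ℤ)) = 2 * Real.pi * I := by
    intro ρ hρ
    have h0 : (0:ℂ) ∈ ball (0:ℂ) ρ := mem_ball_self hρ
    have := circleIntegral.integral_sub_inv_of_mem_ball h0
    simpa [zpow_neg, zpow_one] using this
  -- resolvent identities
  have hTR : ∀ w ∈ resolventSet ℂ T, T * resolvent T w = w • resolvent T w - 1 := by
    intro w hw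
    have hu : IsUnit (algebraMap ℂ (H →L[ℂ] H) w - T) := hw
    have h1 : (algebraMap ℂ (H →L[ℂ] H) w - T) * resolvent T w = 1 := by
      rw [resolvent]; exact Ring.mul_inverse_cancel _ hu
    have h2 : (w • (1 : H →L[ℂ] H) - T) * resolvent T w = 1 := by
      rwa [← Algebra.algebraMap_eq_smul_one]
    rw [sub_mul, smul_mul_assoc, one_mul] at h2
    rw [← h2]; abel
  have hRT : ∀ w ∈ resolventSet ℂ T, resolvent T w * T = w • resolvent T w - 1 := by
    intro w hw
    have hu : IsUnit (algebraMap ℂ (H →L[ℂ] H) w - T) := hw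
    have h1 : resolvent T w * (algebraMap ℂ (H →L[ℂ] H) w - T) = 1 := by
      rw [resolvent]; exact Ring.inverse_mul_cancel _ hu
    have h2 : resolvent T w * (w • (1 : H →L[ℂ] H) - T) = 1 := by
      rwa [← Algebra.algebraMap_eq_smul_one]
    rw [mul_sub, mul_smul_comm, mul_one] at h2
    rw [← h2]; abel
  -- key recurrences
  have hrec_left : ∀ (n : ℤ) (ρ : ℝ), r ≤ ρ → ρ ≤ s →
      T * J n ρ = J (n + 1) ρ - (∮ w in C((0:ℂ), ρ), w ^ n) • 1 := by
    intro n ρ h1 h2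
    have hρ : 0 < ρ := lt_of_lt_of_le hr0 h1
    have hint := hInt n ρ h1 h2
    have hint1 := hInt (n + 1) ρ h1 h2
    have hintc : CircleIntegrable (fun w : ℂ => w ^ n • (1 : H →L[ℂ] H)) 0 ρ :=
      ContinuousOn.circleIntegrable hρ.le ((hzpowCont n ρ hρ).smul continuousOn_const)
    calc T * J n ρ = (ContinuousLinearMap.mul ℂ (H →L[ℂ] H) T) (J n ρ) :=
          (ContinuousLinearMap.mul_apply' ℂ (H →L[ℂ] H) T (J n ρ)).symm
      _ = ∮ w in C((0:ℂ), ρ), (ContinuousLinearMap.mul ℂ (H →L[ℂ] H) T) (w ^ n • resolvent T w) :=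
          (clm_circleIntegral_comm _ hint).symm
      _ = ∮ w in C((0:ℂ), ρ), (w ^ (n + 1) • resolvent T w - w ^ n • (1 : H →L[ℂ] H)) := by
          apply circleIntegral.integral_congr hρ.le
          intro w hw
          have hw0 : w ≠ 0 := by
            intro h
            rw [h] at hw
            have := mem_sphere_zero_iff_norm.mp hw
            simp at this
            exact hρ.ne this
          have hmem : w ∈ resolventSet ℂ T := hAnnSub (hsphereAnn ρ h1 h2 hw)
          simp only [ContinuousLinearMap.mul_apply']
          rw [mul_smul_comm, hTR w hmem, smul_sub, smul_smul, ← zpow_add_one₀ hw0]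
      _ = J (n + 1) ρ - ∮ w in C((0:ℂ), ρ), w ^ n • (1 : H →L[ℂ] H) :=
          circleIntegral.integral_sub hint1 hintc
      _ = J (n + 1) ρ - (∮ w in C((0:ℂ), ρ), w ^ n) • 1 := by
          rw [circleIntegral.integral_smul_const]
  have hrec_right : ∀ (n : ℤ) (ρ : ℝ), r ≤ ρ → ρ ≤ s →
      J n ρ * T = J (n + 1) ρ - (∮ w in C((0:ℂ), ρ), w ^ n) • 1 := by
    intro n ρ h1 h2
    have hρ : 0 < ρ := lt_of_lt_of_le hr0 h1
    have hint := hInt n ρ h1 h2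
    have hint1 := hInt (n + 1) ρ h1 h2
    have hintc : CircleIntegrable (fun w : ℂ => w ^ n • (1 : H →L[ℂ] H)) 0 ρ :=
      ContinuousOn.circleIntegrable hρ.le ((hzpowCont n ρ hρ).smul continuousOn_const)
    calc J n ρ * T = ((ContinuousLinearMap.mul ℂ (H →L[ℂ] H)).flip T) (J n ρ) := by
          rw [ContinuousLinearMap.flip_apply, ContinuousLinearMap.mul_apply']
      _ = ∮ w in C((0:ℂ), ρ), ((ContinuousLinearMap.mul ℂ (H →L[ℂ] H)).flip T) (w ^ n • resolvent T w) :=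
          (clm_circleIntegral_comm _ hint).symm
      _ = ∮ w in C((0:ℂ), ρ), (w ^ (n + 1) • resolvent T w - w ^ n • (1 : H →L[ℂ] H)) := by
          apply circleIntegral.integral_congr hρ.le
          intro w hw
          have hw0 : w ≠ 0 := by
            intro h
            rw [h] at hw
            have := mem_sphere_zero_iff_norm.mp hw
            simp at this
            exact hρ.ne this
          have hmem : w ∈ resolventSet ℂ T := hAnnSub (hsphereAnn ρ h1 h2 hw)
          simp only [ContinuousLinearMap.flip_apply, ContinuousLinearMap.mul_apply']
          rw [smul_mul_assoc, hRT w hmem, smul_sub, smul_smul, ← zpow_add_one₀ hw0]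
      _ = J (n + 1) ρ - ∮ w in C((0:ℂ), ρ), w ^ n • (1 : H →L[ℂ] H) :=
          circleIntegral.integral_sub hint1 hintc
      _ = J (n + 1) ρ - (∮ w in C((0:ℂ), ρ), w ^ n) • 1 := by
          rw [circleIntegral.integral_smul_const]
  -- iterated versions
  have hB : ∀ n : ℕ, J (n : ℤ) r = T ^ n * J 0 r := by
    intro n
    induction n with
    | zero => simp
    | succ m ih =>
      have hm : (m : ℤ) ≠ -1 := by omega
      have := hrec_left (m : ℤ) r le_rfl hrs
      rw [hzp0 (m : ℤ) hm r, zero_smul, sub_zero] at this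
      have hcast : ((m : ℤ) + 1) = ((m + 1 : ℕ) : ℤ) := by push_cast; ring
      rw [hcast] at this
      rw [← this, ih, ← mul_assoc, ← pow_succ']
  have hA' : ∀ n : ℕ, J (-(n + 1 : ℕ) : ℤ) s * T ^ (n + 1) = J 0 s - ((2 * Real.pi * I : ℂ)) • 1 := by
    intro n
    induction n with
    | zero =>
      have := hrec_right (-1 : ℤ) s hrs le_rfl
      rw [hzp1 s hs0] at this
      simpa using this
    | succ m ih =>
      have hm : (-(m + 2 : ℕ) : ℤ) ≠ -1 := by omega
      have hstep := hrec_right (-(m + 2 : ℕ) : ℤ) s hrs le_rfl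
      rw [hzp0 _ hm s, zero_smul, sub_zero] at hstep
      have hcast : (-(m + 2 : ℕ) : ℤ) + 1 = (-(m + 1 : ℕ) : ℤ) := by push_cast; ring
      rw [hcast] at hstep
      calc J (-(m + 2 : ℕ) : ℤ) s * T ^ (m + 2)
          = J (-(m + 2 : ℕ) : ℤ) s * (T * T ^ (m + 1)) := by rw [pow_succ']
        _ = (J (-(m + 2 : ℕ) : ℤ) s * T) * T ^ (m + 1) := by rw [mul_assoc]
        _ = J (-(m + 1 : ℕ) : ℤ) s * T ^ (m + 1) := by rw [hstep]
        _ = J 0 s - ((2 * Real.pi * I : ℂ)) • 1 := ih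
  -- Cauchy's theorem on the annulus
  have hCauchy : J 0 s = J 0 r := by
    have h1 : (∮ w in C((0:ℂ), s), resolvent T w) = ∮ w in C((0:ℂ), r), resolvent T w := by
      refine circleIntegral_eq_of_differentiable_on_annulus_off_countable hr0 hrs
        Set.countable_empty hcont ?_
      rintro w ⟨⟨hw1, hw2⟩, -⟩
      exact (spectrum.hasDerivAt_resolvent
        (hAnnSub ⟨ball_subset_closedBall hw1, fun hc => hw2 (ball_subset_closedBall hc)⟩)).differentiableAt
    have h2 : ∀ ρ : ℝ, J 0 ρ = ∮ w in C((0:ℂ), ρ), resolvent T w := by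
      intro ρ
      simp only [hJ, zpow_zero, one_smul]
    rw [h2 s, h2 r, h1]
  -- norm bounds
  have hnormB : ∀ n : ℕ, ‖J (n : ℤ) r‖ ≤ 2 * Real.pi * r * (r ^ n * M) := by
    intro n
    apply circleIntegral.norm_integral_le_of_norm_le_const hr0.le
    intro w hw
    have hwn : ‖w‖ = r := mem_sphere_zero_iff_norm.mp hw
    rw [norm_smul, norm_zpow, hwn, zpow_natCast]
    exact mul_le_mul_of_nonneg_left (hM w (hsphereAnn r le_rfl hrs hw))
      (pow_nonneg hr0.le n)
  have hnormA : ∀ n : ℕ, ‖J (-(n + 1 : ℕ) : ℤ) s‖ ≤ 2 * Real.pi * s * M := by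
    intro n
    apply circleIntegral.norm_integral_le_of_norm_le_const hs0.le
    intro w hw
    have hwn : ‖w‖ = s := mem_sphere_zero_iff_norm.mp hw
    rw [norm_smul, norm_zpow, hwn]
    have h1 : s ^ (-(n + 1 : ℕ) : ℤ) ≤ 1 := by
      rw [zpow_neg, zpow_natCast]
      exact inv_le_one_of_one_le₀ (one_le_pow₀ hs1.le)
    have h2 : ‖resolvent T w‖ ≤ M := hM w (hsphereAnn s hrs le_rfl hw)
    calc s ^ (-(n + 1 : ℕ) : ℤ) * ‖resolvent T w‖ ≤ 1 * M := by
          apply mul_le_mul h1 h2 (norm_nonneg _)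
          norm_num
      _ = M := one_mul M
  -- boundedness of u from the limsup hypothesis
  have hbdd : IsBoundedUnder (· ≤ ·) atTop u := by
    by_contra hb
    have hempty : {a : ℝ | ∀ᶠ n in atTop, u n ≤ a} = ∅ := by
      rw [Set.eq_empty_iff_forall_notMem]
      exact fun a ha => hb ⟨a, ha⟩
    rw [Filter.limsup_eq, hempty, Real.sInf_empty] at hsup
    exact lt_irrefl 0 hsup
  have hcob : IsCoboundedUnder (· ≥ ·) atTop u := hbdd.isCoboundedUnder_ge
  have hfreq : ∀ ε'' : ℝ, 0 < ε'' → ∃ᶠ n in atTop, u n < ε'' := by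
    intro ε'' hε''
    exact frequently_lt_of_liminf_lt hcob (by rw [hinf]; exact hε'')
  -- the "outside" part of z vanishes
  set Q : H →L[ℂ] H := J 0 s - ((2 * Real.pi * I : ℂ)) • 1 with hQdef
  have hQbound : ∀ n : ℕ, ‖Q z‖ ≤ (2 * Real.pi * s * M) * u (n + 1) := by
    intro n
    calc ‖Q z‖ = ‖(J (-(n + 1 : ℕ) : ℤ) s * T ^ (n + 1)) z‖ := by rw [hA' n]
      _ = ‖(J (-(n + 1 : ℕ) : ℤ) s) ((T ^ (n + 1)) z)‖ := by
          rw [ContinuousLinearMap.mul_apply]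
      _ ≤ ‖J (-(n + 1 : ℕ) : ℤ) s‖ * ‖(T ^ (n + 1)) z‖ :=
          ContinuousLinearMap.le_opNorm _ _
      _ ≤ (2 * Real.pi * s * M) * u (n + 1) :=
          mul_le_mul_of_nonneg_right (hnormA n) (norm_nonneg _)
  have hQz : Q z = 0 := by
    rw [← norm_le_zero_iff]
    by_contra hcon
    push_neg at hcon
    set C : ℝ := 2 * Real.pi * s * M with hCdef
    have hC0 : 0 ≤ C := by
      have := Real.pi_pos
      positivity
    have hδ : 0 < ‖Q z‖ / (C + 1) := by positivity
    obtain ⟨n, hn1, hn⟩ := frequently_atTop.mp (hfreq _ hδ) 1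
    obtain ⟨m, rfl⟩ : ∃ m, n = m + 1 := ⟨n - 1, by omega⟩
    have h1 := hQbound m
    have h2 : ‖Q z‖ ≤ C * (‖Q z‖ / (C + 1)) :=
      le_trans h1 (mul_le_mul_of_nonneg_left hn.le hC0)
    have hC1 : (0:ℝ) < C + 1 := by linarith
    have h3 : C * (‖Q z‖ / (C + 1)) < ‖Q z‖ := by
      rw [← mul_div_assoc, div_lt_iff₀ hC1]
      nlinarith [hcon]
    linarith
  have hJ0z : (J 0 r) z = (2 * Real.pi * I : ℂ) • z := by
    have h1 : (J 0 s) z - (2 * Real.pi * I : ℂ) • z = 0 := by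
      have := hQz
      rw [hQdef] at this
      simpa [ContinuousLinearMap.sub_apply, ContinuousLinearMap.smul_apply,
        ContinuousLinearMap.one_apply] using this
    rw [← hCauchy]
    exact sub_eq_zero.mp h1
  -- conclude Tⁿ z → 0
  have hπ : (0:ℝ) < 2 * Real.pi := by positivity
  have hnormI : ‖(2 * Real.pi * I : ℂ)‖ = 2 * Real.pi := by
    simp [map_mul,
      _root_.abs_of_nonneg Real.pi_nonneg]
  have hun : ∀ n : ℕ, u n ≤ r ^ n * (r * M * ‖z‖) := by
    intro n
    have hb : (2 * Real.pi) * u n ≤ (2 * Real.pi) * (r ^ n * (r * M * ‖z‖)) := by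
      calc (2 * Real.pi) * u n = ‖(2 * Real.pi * I : ℂ) • ((T ^ n) z)‖ := by
            rw [norm_smul, hnormI]
        _ = ‖(T ^ n) ((2 * Real.pi * I : ℂ) • z)‖ := by rw [map_smul]
        _ = ‖(T ^ n) ((J 0 r) z)‖ := by rw [hJ0z]
        _ = ‖(T ^ n * J 0 r) z‖ := by rw [ContinuousLinearMap.mul_apply]
        _ = ‖(J (n : ℤ) r) z‖ := by rw [← hB n]
        _ ≤ ‖J (n : ℤ) r‖ * ‖z‖ := ContinuousLinearMap.le_opNorm _ _
        _ ≤ (2 * Real.pi * r * (r ^ n * M)) * ‖z‖ :=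
            mul_le_mul_of_nonneg_right (hnormB n) (norm_nonneg _)
        _ = (2 * Real.pi) * (r ^ n * (r * M * ‖z‖)) := by ring
    exact le_of_mul_le_mul_left hb hπ
  have htend : Tendsto u atTop (𝓝 0) := by
    apply squeeze_zero (fun n => norm_nonneg _) hun
    have := (tendsto_pow_atTop_nhds_zero_of_lt_one hr0.le hr1).mul_const (r * M * ‖z‖)
    simpa using this
  rw [htend.limsup_eq] at hsup
  exact lt_irrefl 0 hsup
end

section
/- The weighted bilateral shift A on ℓ²(ℤ) defined by A e_i = (1/2) e_{i+1} for i ≤ −2 and A e_i = 2 e_{i+1} for i > −2 satisfies: for every nonzero x ∈ ℓ²(ℤ), ‖Aⁿx‖ → ∞ as n → ∞. In particular, A is not Li-Yorke chaotic and not distributionally chaotic. -/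
open Filter Topology

/-- `T` is distributionally chaotic. -/
def DistributionallyChaotic {E : Type*} [NormedAddCommGroup E] [NormedSpace ℂ E]
    (T : E →L[ℂ] E) : Prop :=
  ∃ ε > (0 : ℝ), ∃ Λ : Set E, ¬Λ.Countable ∧ ∀ x ∈ Λ, ∀ y ∈ Λ, x ≠ y →
    (∀ τ > (0 : ℝ), Filter.limsup
        (fun n : ℕ => (Set.ncard {i | i < n ∧ ‖(T ^ i) x - (T ^ i) y‖ < τ} : ℝ) / n)
        Filter.atTop = 1) ∧
      Filter.liminf
        (fun n : ℕ => (Set.ncard {i | i < n ∧ ‖(T ^ i) x - (T ^ i) y‖ < ε} : ℝ) / n)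
        Filter.atTop = 0

/-- The weight sequence. -/
noncomputable def bsWeight (m : ℤ) : ℂ := if m ≤ -2 then (1 / 2 : ℂ) else 2

/-- Coordinate evaluation as a continuous linear functional on `ℓ²(ℤ)`. -/
noncomputable def bsEval (k : ℤ) : lp (fun _ : ℤ => ℂ) 2 →L[ℂ] ℂ :=
  LinearMap.mkContinuous
    { toFun := fun f => f k
      map_add' := fun f g => by
        show (f + g) k = f k + g k
        rw [lp.coeFn_add, Pi.add_apply]
      map_smul' := fun c f => by
        show (c • f) k = (RingHom.id ℂ) c • f k
        rw [lp.coeFn_smul, Pi.smul_apply, RingHom.id_apply] }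
    1 (fun f => by
      simpa using lp.norm_apply_le_norm (by norm_num : (2 : ENNReal) ≠ 0) f k)

lemma bsEval_apply (k : ℤ) (f : lp (fun _ : ℤ => ℂ) 2) : bsEval k f = f k := rfl

lemma bs_shift
    (A : lp (fun _ : ℤ => ℂ) 2 →L[ℂ] lp (fun _ : ℤ => ℂ) 2)
    (hA : ∀ i : ℤ, A (lp.single 2 i (1 : ℂ)) = bsWeight i • lp.single 2 (i + 1) (1 : ℂ))
    (x : lp (fun _ : ℤ => ℂ) 2) (k : ℤ) :
    (A x) k = bsWeight (k - 1) * x (k - 1) := by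
  have hs : HasSum (fun i : ℤ => lp.single 2 i (x i)) x :=
    lp.hasSum_single ENNReal.ofNat_ne_top x
  have hs2 : HasSum (fun i : ℤ => bsEval k (A (lp.single 2 i (x i)))) (bsEval k (A x)) :=
    (hs.mapL A).mapL (bsEval k)
  have hterm : ∀ i : ℤ, bsEval k (A (lp.single 2 i (x i)))
      = if i = k - 1 then bsWeight (k - 1) * x (k - 1) else 0 := by
    intro i
    have h1 : lp.single 2 i (x i)
        = (x i • lp.single 2 i (1 : ℂ) : lp (fun _ : ℤ => ℂ) 2) := by
      rw [← lp.single_smul (E := fun _ : ℤ => ℂ) 2 i (x i) (1 : ℂ), smul_eq_mul, mul_one]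
    rw [h1, map_smul, map_smul, hA i, map_smul, smul_smul, bsEval_apply, smul_eq_mul]
    by_cases hk : k = i + 1
    · have hik : i = k - 1 := by omega
      subst hik
      have hk1 : k - 1 + 1 = k := by omega
      rw [hk1, lp.single_apply_self, if_pos rfl]
      ring
    · rw [lp.single_apply_ne 2 (i + 1) _ hk, if_neg (by omega)]
      ring
  have h0 : HasSum (fun i : ℤ => bsEval k (A (lp.single 2 i (x i))))
      (bsWeight (k - 1) * x (k - 1)) := by
    rw [funext hterm]
    exact hasSum_ite_eq (k - 1) _
  have := hs2.unique h0
  rw [← bsEval_apply k (A x), this]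

lemma bs_pow_apply
    (A : lp (fun _ : ℤ => ℂ) 2 →L[ℂ] lp (fun _ : ℤ => ℂ) 2)
    (hA : ∀ i : ℤ, A (lp.single 2 i (1 : ℂ)) = bsWeight i • lp.single 2 (i + 1) (1 : ℂ))
    (x : lp (fun _ : ℤ => ℂ) 2) (j : ℤ) :
    ∀ n : ℕ, ((A ^ n) x) (j + n) = (∏ m ∈ Finset.range n, bsWeight (j + m)) * x j := by
  intro n
  induction n with
  | zero => simp
  | succ n ih =>
      have h1 : (A ^ (n + 1)) x = A ((A ^ n) x) := by
        rw [pow_succ' A n]; rfl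
      have h2 : (j + ((n : ℤ) + 1)) - 1 = j + n := by ring
      rw [h1]
      have := bs_shift A hA ((A ^ n) x) (j + (n + 1 : ℕ))
      rw [this]
      rw [Nat.cast_succ]
      rw [h2, ih, Finset.prod_range_succ]
      ring

theorem bilateral_shift_orbits_tendsto_atTop
    (A : lp (fun _ : ℤ => ℂ) 2 →L[ℂ] lp (fun _ : ℤ => ℂ) 2)
    (hA₁ : ∀ i : ℤ, i ≤ -2 →
      A (lp.single 2 i (1 : ℂ)) = ((1 : ℂ) / 2) • lp.single 2 (i + 1) (1 : ℂ))
    (hA₂ : ∀ i : ℤ, -2 < i →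
      A (lp.single 2 i (1 : ℂ)) = (2 : ℂ) • lp.single 2 (i + 1) (1 : ℂ)) :
    (∀ x : lp (fun _ : ℤ => ℂ) 2, x ≠ 0 →
        Tendsto (fun n => ‖(A ^ n) x‖) atTop atTop) ∧
      ¬ LiYorkeChaotic A ∧ ¬ DistributionallyChaotic A := by
  have hA : ∀ i : ℤ, A (lp.single 2 i (1 : ℂ)) = bsWeight i • lp.single 2 (i + 1) (1 : ℂ) := by
    intro i
    by_cases hi : i ≤ -2
    · rw [hA₁ i hi]; unfold bsWeight; rw [if_pos hi]
    · rw [hA₂ i (by omega)]; unfold bsWeight; rw [if_neg hi]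
  -- main statement
  have main : ∀ x : lp (fun _ : ℤ => ℂ) 2, x ≠ 0 →
      Tendsto (fun n => ‖(A ^ n) x‖) atTop atTop := by
    intro x hx
    obtain ⟨j, hj⟩ : ∃ j : ℤ, x j ≠ 0 := by
      by_contra h
      push_neg at h
      exact hx (lp.ext (funext h))
    set N₀ : ℕ := (-1 - j).toNat with hN₀
    -- norm of the weight products
    have hwnorm : ∀ m : ℕ, ‖bsWeight (j + m)‖ = if m < N₀ then (1 / 2 : ℝ) else 2 := by
      intro m
      unfold bsWeight
      by_cases hm : j + (m : ℤ) ≤ -2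
      · rw [if_pos hm, if_pos (by omega)]
        norm_num
      · rw [if_neg hm, if_neg (by omega)]
        norm_num
    have hprod : ∀ n : ℕ, (2 : ℝ) ^ n / 4 ^ N₀ ≤
        ∏ m ∈ Finset.range n, ‖bsWeight (j + m)‖ := by
      have key : ∀ n : ℕ, (2 : ℝ) ^ n / 4 ^ (min n N₀) ≤
          ∏ m ∈ Finset.range n, ‖bsWeight (j + m)‖ := by
        intro n
        induction n with
        | zero => simp
        | succ n ih =>
            rw [Finset.prod_range_succ, hwnorm n]
            by_cases hn : n < N₀
            · rw [if_pos hn, min_eq_left hn]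
              rw [min_eq_left (Nat.le_of_lt hn)] at ih
              have hEq : (2 : ℝ) ^ (n + 1) / 4 ^ (n + 1) = 2 ^ n / 4 ^ n * (1 / 2) := by
                rw [pow_succ, pow_succ]; field_simp; ring
              rw [hEq]
              have h4 : (0:ℝ) < 4 ^ n := by positivity
              nlinarith [ih]
            · have hge : N₀ ≤ n := le_of_not_gt hn
              rw [if_neg hn, min_eq_right (hge.trans (Nat.le_succ n))]
              rw [min_eq_right hge] at ih
              have hEq : (2 : ℝ) ^ (n + 1) / 4 ^ N₀ = 2 ^ n / 4 ^ N₀ * 2 := by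
                rw [pow_succ]; ring
              rw [hEq]
              have hprod_nonneg : (0:ℝ) ≤ ∏ m ∈ Finset.range n, ‖bsWeight (j + m)‖ :=
                Finset.prod_nonneg fun _ _ => norm_nonneg _
              nlinarith [ih]
      intro n
      refine le_trans ?_ (key n)
      apply div_le_div_of_nonneg_left (by positivity) (by positivity)
      exact pow_le_pow_right₀ (by norm_num) (min_le_right n N₀)
    set c : ℝ := ‖x j‖ / 4 ^ N₀ with hc
    have hcpos : 0 < c := by
      have : 0 < ‖x j‖ := norm_pos_iff.mpr hj
      positivity
    have hbound : ∀ n : ℕ, c * 2 ^ n ≤ ‖(A ^ n) x‖ := by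
      intro n
      have h1 : ‖((A ^ n) x) (j + n)‖ ≤ ‖(A ^ n) x‖ :=
        lp.norm_apply_le_norm (by norm_num) ((A ^ n) x) (j + n)
      rw [bs_pow_apply A hA x j n] at h1
      rw [norm_mul, norm_prod] at h1
      refine le_trans ?_ h1
      rw [hc]
      have := hprod n
      have hxj : (0:ℝ) ≤ ‖x j‖ := norm_nonneg _
      calc ‖x j‖ / 4 ^ N₀ * 2 ^ n = (2 ^ n / 4 ^ N₀) * ‖x j‖ := by ring
        _ ≤ (∏ m ∈ Finset.range n, ‖bsWeight (j + m)‖) * ‖x j‖ := by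
            apply mul_le_mul_of_nonneg_right this hxj
    refine tendsto_atTop_mono hbound ?_
    exact Tendsto.const_mul_atTop hcpos (tendsto_pow_atTop_atTop_of_one_lt one_lt_two)
  refine ⟨main, ?_, ?_⟩
  · -- not Li-Yorke chaotic
    rintro ⟨Γ, hΓ, h⟩
    obtain ⟨x, hx, y, hy, hxy⟩ : Γ.Nontrivial := by
      by_contra hns
      exact hΓ ((Set.not_nontrivial_iff.mp hns).countable)
    obtain ⟨hpos, -⟩ := h x hx y hy hxy
    have hT : Tendsto (fun n : ℕ => ‖(A ^ n) x - (A ^ n) y‖) atTop atTop := by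
      have := main (x - y) (sub_ne_zero.mpr hxy)
      refine this.congr fun n => ?_
      rw [map_sub]
    have hempty : {a : ℝ | ∀ᶠ n : ℕ in atTop, ‖(A ^ n) x - (A ^ n) y‖ ≤ a} = ∅ := by
      ext a
      simp only [Set.mem_setOf_eq, Set.mem_empty_iff_false, iff_false]
      intro ha
      have hge : ∀ᶠ n : ℕ in atTop, a + 1 ≤ ‖(A ^ n) x - (A ^ n) y‖ :=
        hT.eventually_ge_atTop (a + 1)
      obtain ⟨n, h1, h2⟩ := (ha.and hge).exists
      linarith
    have : limsup (fun n : ℕ => ‖(A ^ n) x - (A ^ n) y‖) atTop = 0 := by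
      rw [Filter.limsup_eq, hempty, Real.sInf_empty]
    rw [this] at hpos
    exact lt_irrefl 0 hpos
  · -- not distributionally chaotic
    rintro ⟨ε, hε, Λ, hΛ, h⟩
    obtain ⟨x, hx, y, hy, hxy⟩ : Λ.Nontrivial := by
      by_contra hns
      exact hΛ ((Set.not_nontrivial_iff.mp hns).countable)
    obtain ⟨h1, -⟩ := h x hx y hy hxy
    have hT : Tendsto (fun n : ℕ => ‖(A ^ n) x - (A ^ n) y‖) atTop atTop := by
      have := main (x - y) (sub_ne_zero.mpr hxy)
      refine this.congr fun n => ?_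
      rw [map_sub]
    have h11 := h1 1 one_pos
    obtain ⟨N, hN⟩ := (tendsto_atTop.mp hT 1).exists_forall_of_atTop
    have hsub : ∀ n : ℕ, {i : ℕ | i < n ∧ ‖(A ^ i) x - (A ^ i) y‖ < 1} ⊆ Set.Iio N := by
      intro n i hi
      simp only [Set.mem_setOf_eq] at hi
      by_contra hiN
      simp only [Set.mem_Iio, not_lt] at hiN
      exact absurd (hN i hiN) (not_le.mpr hi.2)
    have hcard : ∀ n : ℕ,
        (Set.ncard {i : ℕ | i < n ∧ ‖(A ^ i) x - (A ^ i) y‖ < 1} : ℝ) ≤ N := by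
      intro n
      have hle := Set.ncard_le_ncard (hsub n) (Set.finite_Iio N)
      have hIio : (Set.Iio N : Set ℕ).ncard = N := by
        rw [← Finset.coe_Iio, Set.ncard_coe_finset, Nat.card_Iio]
      rw [hIio] at hle
      exact_mod_cast hle
    have hzero : Tendsto
        (fun n : ℕ => (Set.ncard {i : ℕ | i < n ∧ ‖(A ^ i) x - (A ^ i) y‖ < 1} : ℝ) / n)
        atTop (𝓝 0) := by
      apply squeeze_zero (fun n => by positivity) (fun n => ?_)
        (tendsto_const_div_atTop_nhds_zero_nat (N : ℝ))
      by_cases hn : n = 0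
      · subst hn; simp
      · exact div_le_div_of_nonneg_right (hcard n) (by positivity) |>.trans_eq rfl
    rw [hzero.limsup_eq] at h11
    exact zero_ne_one h11
end

section
/- Let A be the weighted bilateral shift on ℓ²(ℤ) given by A e_i = 2 e_{i−1} for i ≥ 1, A e_0 = e_{−1}, and A e_i = (|i|/(|i|+1)) e_{i−1} for i ≤ −1. Then A is norm-unimodal: for every m ∈ ℕ, ‖Aⁱ e_m‖ ≥ 2ⁱ for 1 ≤ i ≤ m and lim_{n→∞} ‖Aⁿ e_m‖ = 0. -/
open Filter Topology

theorem weighted_bilateral_shift_norm_unimodal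
    (A : lp (fun _ : ℤ => ℂ) 2 →L[ℂ] lp (fun _ : ℤ => ℂ) 2)
    (hAp : ∀ i : ℤ, 1 ≤ i →
      A (lp.single 2 i (1 : ℂ)) = (2 : ℂ) • lp.single 2 (i - 1) (1 : ℂ))
    (hA₀ : A (lp.single 2 (0 : ℤ) (1 : ℂ)) = lp.single 2 (-1 : ℤ) (1 : ℂ))
    (hAn : ∀ i : ℤ, i ≤ -1 →
      A (lp.single 2 i (1 : ℂ)) =
        ((i.natAbs : ℂ) / ((i.natAbs : ℂ) + 1)) • lp.single 2 (i - 1) (1 : ℂ)) :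
    ∀ m : ℕ,
      (∀ i : ℕ, 1 ≤ i → i ≤ m →
        (2 : ℝ) ^ i ≤ ‖(A ^ i) (lp.single 2 (m : ℤ) (1 : ℂ))‖) ∧
      Tendsto (fun n => ‖(A ^ n) (lp.single 2 (m : ℤ) (1 : ℂ))‖) atTop (𝓝 0) := by
  have hnorm : ∀ j : ℤ, ‖lp.single (E := fun _ : ℤ => ℂ) 2 j (1 : ℂ)‖ = 1 := by
    intro j
    have := lp.norm_single (E := fun _ : ℤ => ℂ) (p := 2) (by norm_num) j (1 : ℂ)
    simpa using this
  intro m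
  -- Phase 1: A^i e_m = 2^i • e_{m-i} for i ≤ m
  have h1 : ∀ i : ℕ, i ≤ m →
      (A ^ i) (lp.single 2 (m : ℤ) (1 : ℂ)) =
        ((2 : ℂ) ^ i) • lp.single 2 ((m : ℤ) - i) (1 : ℂ) := by
    intro i
    induction i with
    | zero => intro _; simp
    | succ k ih =>
      intro hk
      have hk' : k ≤ m := Nat.le_of_succ_le hk
      rw [pow_succ', ContinuousLinearMap.mul_apply, ih hk', map_smul,
        hAp ((m : ℤ) - k) (by push_cast; omega)]
      rw [smul_smul]
      push_cast
      ring_nf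
  -- consequence: A^m e_m = 2^m • e_0
  have h2 : (A ^ m) (lp.single 2 (m : ℤ) (1 : ℂ))
      = ((2 : ℂ) ^ m) • lp.single 2 (0 : ℤ) (1 : ℂ) := by
    simpa using h1 m le_rfl
  -- Phase 2: A^{m+1+k} e_m = (2^m/(k+1)) • e_{-(k+1)}
  have h3 : ∀ k : ℕ,
      (A ^ (m + 1 + k)) (lp.single 2 (m : ℤ) (1 : ℂ)) =
        (((2 : ℂ) ^ m) / (k + 1)) • lp.single 2 (-(k + 1) : ℤ) (1 : ℂ) := by
    intro k
    induction k with
    | zero =>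
      have h0 : m + 1 + 0 = m + 1 := rfl
      rw [h0, pow_succ', ContinuousLinearMap.mul_apply, h2, map_smul, hA₀]
      norm_num
    | succ k ih =>
      have : m + 1 + (k + 1) = (m + 1 + k) + 1 := by omega
      rw [this, pow_succ', ContinuousLinearMap.mul_apply, ih, map_smul,
        hAn (-(k + 1) : ℤ) (by omega)]
      have hna : ((-((k : ℤ) + 1)) : ℤ).natAbs = k + 1 := by omega
      rw [hna, smul_smul]
      have he : (-((k : ℤ) + 1) - 1) = (-((k : ℤ) + 1 + 1)) := by ring
      rw [he]
      congr 1
      have h1' : ((k : ℂ) + 1) ≠ 0 := by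
        have : (0 : ℝ) < (k : ℝ) + 1 := by positivity
        intro h
        have := congrArg Complex.re h
        simp at this
        linarith
      have h2' : ((k : ℂ) + 1 + 1) ≠ 0 := by
        have : (0 : ℝ) < (k : ℝ) + 2 := by positivity
        intro h
        have := congrArg Complex.re h
        simp at this
        linarith
      push_cast
      field_simp
  constructor
  · intro i hi him
    rw [h1 i him, norm_smul, hnorm]
    simp [norm_pow]
  · -- eventually equal to 2^m/(n-m)
    have hev : ∀ᶠ n : ℕ in atTop,
        ‖(A ^ n) (lp.single 2 (m : ℤ) (1 : ℂ))‖ = (2 : ℝ) ^ m / ((n : ℝ) - m) := by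
      filter_upwards [eventually_ge_atTop (m + 1)] with n hn
      obtain ⟨k, hk⟩ : ∃ k, n = m + 1 + k := ⟨n - (m + 1), by omega⟩
      subst hk
      rw [h3 k, norm_smul, hnorm, mul_one]
      rw [norm_div, norm_pow]
      have hkn : ‖((k : ℂ) + 1)‖ = (k : ℝ) + 1 := by
        rw [show ((k : ℂ) + 1) = ((k + 1 : ℕ) : ℂ) by push_cast; ring,
          Complex.norm_natCast]
        push_cast; ring
      rw [hkn]
      push_cast
      norm_num
      ring_nf
    have hlim : Tendsto (fun n : ℕ => (2 : ℝ) ^ m / ((n : ℝ) - m)) atTop (𝓝 0) := by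
      apply Tendsto.const_div_atTop
      exact (tendsto_atTop_add_const_right atTop (-(m : ℝ))
        tendsto_natCast_atTop_atTop).congr (fun n => by ring)
    exact Tendsto.congr' (EventuallyEq.symm hev) hlim
end
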